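/- arXiv:2105.07724 — 3 statements merged into one kernel-verified Lean document; each statement's English description precedes it below -/
import Mathlib

section
/- For a formal variable v and integers a < ppar (ppar ≥ 2 a modulus), one has the expansion [b·p^{(t)}]_v = sum over tuples (i_t, ..., i_0) with 0 ≤ i_t ≤ (b'-1)/2, 0 ≤ i_{t-1} ≤ (p'-1)/2, ..., 0 ≤ i_0 ≤ (ℓ'-1)/2 of the products [2]_{v^{(b-1-2i_t)p^{(t)}}} · [2]_{v^{(p-1-2i_{t-1})p^{(t-1)}}} · ... · [2]_{v^{(ℓ-1-2i_0)}}, where x' denotes x if x is odd and x-1 if x is even, and [2]_{v^0} is interpreted as 1. -/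
/-- `plpow p ℓ 0 = 1` and `plpow p ℓ i = p^(i-1) * ℓ` for `i ≥ 1`. -/
def plpow (p ℓ : ℕ) : ℕ → ℕ
  | 0 => 1
  | i + 1 => p ^ i * ℓ

/-- The quantum integer `[m]_y = (y^m - y^{-m})/(y - y^{-1})` at base `y`. -/
noncomputable def qnumAt (y : RatFunc ℚ) (m : ℕ) : RatFunc ℚ :=
  (y ^ (m : ℤ) - y ^ (-(m : ℤ))) / (y - y⁻¹)

/-- `[2]_{v^e}`, interpreted as `1` when `e = 0`. -/
noncomputable def qtwo (e : ℕ) : RatFunc ℚ :=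
  if e = 0 then 1 else RatFunc.X ^ (e : ℤ) + RatFunc.X ^ (-(e : ℤ))

/-- `x' = x` if `x` is odd, `x - 1` if `x` is even. -/
def oddPart (x : ℕ) : ℕ := if Odd x then x else x - 1

noncomputable def Ff (n : ℕ) : RatFunc ℚ := RatFunc.X ^ n - (RatFunc.X ^ n)⁻¹

lemma hX : (RatFunc.X : RatFunc ℚ) ≠ 0 := RatFunc.X_ne_zero

lemma Ff_eq (n : ℕ) : (RatFunc.X : RatFunc ℚ) ^ (n : ℤ) - RatFunc.X ^ (-(n : ℤ)) = Ff n := by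
  rw [Ff, zpow_neg, zpow_natCast]

lemma qtwo_eq (e : ℕ) (he : e ≠ 0) :
    qtwo e = RatFunc.X ^ e + (RatFunc.X ^ e)⁻¹ := by
  rw [qtwo, if_neg he, zpow_neg, zpow_natCast]

lemma step (k N : ℕ) : qtwo ((k+1)*N) * Ff N = Ff ((k+2)*N) - Ff (k*N) := by
  rcases Nat.eq_zero_or_pos N with h | h
  · simp [h, qtwo, Ff]
  · have hne : (k+1)*N ≠ 0 := by positivity
    rw [qtwo_eq _ hne, Ff, Ff, Ff]
    have h1 : (RatFunc.X : RatFunc ℚ) ^ ((k+1)*N) ≠ 0 := pow_ne_zero _ hX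
    have h2 : (RatFunc.X : RatFunc ℚ) ^ ((k+2)*N) ≠ 0 := pow_ne_zero _ hX
    have h3 : (RatFunc.X : RatFunc ℚ) ^ (k*N) ≠ 0 := pow_ne_zero _ hX
    have h4 : (RatFunc.X : RatFunc ℚ) ^ N ≠ 0 := pow_ne_zero _ hX
    field_simp
    ring

noncomputable def Sq (m N : ℕ) : RatFunc ℚ :=
  ∑ i ∈ Finset.range ((oddPart m - 1)/2 + 1), qtwo ((m - 1 - 2*i) * N)

lemma oddPart_add_two (x : ℕ) (hx : 1 ≤ x) : oddPart (x+2) = oddPart x + 2 := by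
  unfold oddPart
  rcases Nat.even_or_odd x with h | h
  · rw [if_neg, if_neg]
    · omega
    · simpa [Nat.odd_iff, Nat.even_iff] using h
    · simp [Nat.odd_add, Nat.even_iff.mp h]
      simpa [Nat.odd_iff, Nat.even_iff] using h
  · rw [if_pos, if_pos h]
    simpa [Nat.odd_add] using h

lemma oddPart_pos (x : ℕ) (hx : 1 ≤ x) : 1 ≤ oddPart x := by
  unfold oddPart
  split
  · omega
  · rename_i h
    rcases Nat.even_or_odd x with he | ho
    · have : x ≠ 1 := by rintro rfl; exact h (by decide)
      omega
    · exact absurd ho h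

lemma Sq_succ_succ (k N : ℕ) :
    Sq (k+3) N = qtwo ((k+2)*N) + Sq (k+1) N := by
  have h1 : oddPart (k+3) = oddPart (k+1) + 2 := oddPart_add_two _ (by omega)
  have h2 : 1 ≤ oddPart (k+1) := oddPart_pos _ (by omega)
  have hc : (oddPart (k+3) - 1)/2 + 1 = ((oddPart (k+1) - 1)/2 + 1) + 1 := by omega
  rw [Sq, hc, Finset.sum_range_succ']
  rw [Sq]
  have he : ∀ i, (k+3-1-2*(i+1)) = (k+1-1-2*i) := by intro i; omega
  simp only [he]
  have : (k+3-1-2*0) = k+2 := by omega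
  rw [this, add_comm]

lemma Sq_mul_Ff (m N : ℕ) (hm : 1 ≤ m) : Sq m N * Ff N = Ff (m*N) := by
  induction m using Nat.strong_induction_on with
  | _ m ih =>
    match m, hm with
    | 1, _ => simp [Sq, oddPart, qtwo]
    | 2, _ =>
        have : Sq 2 N = qtwo ((0+1)*N) := by simp [Sq, oddPart, Nat.odd_iff]
        rw [this, step]
        simp [Ff]
    | (k+3), _ =>
        rw [Sq_succ_succ, add_mul, step (k+1) N, ih (k+1) (by omega) (by omega)]
        ring


lemma qnumAt_eqF (m : ℕ) : qnumAt RatFunc.X m = Ff m / Ff 1 := by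
  rw [qnumAt, Ff_eq]
  congr 1
  rw [Ff, pow_one]

lemma Ff_one_ne_zero : Ff 1 ≠ 0 := by
  rw [Ff, pow_one, sub_ne_zero]
  intro h
  have h2 : (RatFunc.X : RatFunc ℚ) * RatFunc.X = 1 := by
    nth_rewrite 2 [h]
    exact mul_inv_cancel₀ hX
  have hinj := RatFunc.algebraMap_injective (K := ℚ)
  have h3 : (Polynomial.X * Polynomial.X : Polynomial ℚ) = 1 := by
    apply hinj
    rw [map_mul, map_one, RatFunc.algebraMap_X, h2]
  have := congrArg Polynomial.natDegree h3
  simp at this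

lemma qnumAt_one : qnumAt RatFunc.X 1 = 1 := by
  rw [qnumAt_eqF, div_self Ff_one_ne_zero]

lemma qnumAt_mul (m N : ℕ) (hm : 1 ≤ m) :
    qnumAt RatFunc.X (m * N) = Sq m N * qnumAt RatFunc.X N := by
  rw [qnumAt_eqF, qnumAt_eqF, ← Sq_mul_Ff m N hm, mul_div_assoc]

noncomputable def Gp (p ℓ : ℕ) (j : ℕ) : RatFunc ℚ :=
  if j = 0 then Sq ℓ 1 else Sq p (plpow p ℓ j)

lemma plpow_succ (p ℓ n : ℕ) (hn : 1 ≤ n) :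
    plpow p ℓ (n+1) = p * plpow p ℓ n := by
  rcases n with _ | m
  · omega
  · show p ^ (m + 1) * ℓ = p * (p ^ m * ℓ)
    rw [pow_succ]
    ring

lemma qnumAt_plpow (p ℓ : ℕ) (hp : 1 ≤ p) (hℓ : 1 ≤ ℓ) :
    ∀ t, 1 ≤ t → qnumAt RatFunc.X (plpow p ℓ t) = ∏ j ∈ Finset.range t, Gp p ℓ j := by
  intro t ht
  induction t, ht using Nat.le_induction with
  | base =>
      have h1 : plpow p ℓ 1 = ℓ * 1 := by show p ^ 0 * ℓ = ℓ * 1; ring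
      rw [h1, qnumAt_mul ℓ 1 hℓ, qnumAt_one, mul_one]
      simp [Gp]
  | succ n hn ih =>
      rw [plpow_succ p ℓ n hn, qnumAt_mul p _ hp, ih, Finset.prod_range_succ]
      have : Gp p ℓ n = Sq p (plpow p ℓ n) := by rw [Gp, if_neg (by omega)]
      rw [this, mul_comm]


/-- The expansion
`[b·p^{(t)}]_v = ∑_{(i_t,…,i_0)} [2]_{v^{(b-1-2i_t)p^{(t)}}} · [2]_{v^{(p-1-2i_{t-1})p^{(t-1)}}} ⋯ [2]_{v^{(ℓ-1-2i_0)}}`,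
where `0 ≤ i_t ≤ (b'-1)/2`, `0 ≤ i_j ≤ (p'-1)/2` for `0 < j < t`, `0 ≤ i_0 ≤ (ℓ'-1)/2`. -/
theorem qnum_eve_character_expansion (p ℓ b t : ℕ) (hp : 2 ≤ p) (hℓ : 2 ≤ ℓ)
    (hb : 1 ≤ b) (ht : 1 ≤ t) :
    qnumAt RatFunc.X (b * plpow p ℓ t) =
      ∑ A ∈ Fintype.piFinset (fun j : Fin (t + 1) =>
          Finset.range ((if (j : ℕ) = t then (oddPart b - 1) / 2
            else if (j : ℕ) = 0 then (oddPart ℓ - 1) / 2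
            else (oddPart p - 1) / 2) + 1)),
        ∏ j : Fin (t + 1),
          qtwo (if (j : ℕ) = t then (b - 1 - 2 * A j) * plpow p ℓ t
            else if (j : ℕ) = 0 then ℓ - 1 - 2 * A j
            else (p - 1 - 2 * A j) * plpow p ℓ (j : ℕ)) := by
  have hps := Finset.prod_univ_sum
    (fun j : Fin (t + 1) => Finset.range ((if (j : ℕ) = t then (oddPart b - 1) / 2
            else if (j : ℕ) = 0 then (oddPart ℓ - 1) / 2
            else (oddPart p - 1) / 2) + 1))
    (fun (j : Fin (t + 1)) (i : ℕ) => qtwo (if (j : ℕ) = t then (b - 1 - 2 * i) * plpow p ℓ t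
            else if (j : ℕ) = 0 then ℓ - 1 - 2 * i
            else (p - 1 - 2 * i) * plpow p ℓ (j : ℕ)))
  rw [← hps]
  have key : ∀ j : Fin (t+1),
      (∑ i ∈ Finset.range ((if (j : ℕ) = t then (oddPart b - 1) / 2
            else if (j : ℕ) = 0 then (oddPart ℓ - 1) / 2
            else (oddPart p - 1) / 2) + 1),
        qtwo (if (j : ℕ) = t then (b - 1 - 2 * i) * plpow p ℓ t
            else if (j : ℕ) = 0 then ℓ - 1 - 2 * i
            else (p - 1 - 2 * i) * plpow p ℓ (j : ℕ))) =
      (if (j : ℕ) = t then Sq b (plpow p ℓ t) else Gp p ℓ (j : ℕ)) := by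
    intro j
    rcases eq_or_ne (j : ℕ) t with h | h
    · simp [h, Sq]
    · rcases eq_or_ne (j : ℕ) 0 with h0 | h0
      · have ht0 : ¬ ((0:ℕ) = t) := by omega
        simp [h, h0, Gp, Sq, ht0]
      · simp [h, h0, Gp, Sq]
  rw [Finset.prod_congr rfl (fun j _ => key j)]
  rw [Fin.prod_univ_castSucc]
  have hlast : (if ((Fin.last t : Fin (t+1)) : ℕ) = t then Sq b (plpow p ℓ t)
      else Gp p ℓ ((Fin.last t : Fin (t+1)) : ℕ)) = Sq b (plpow p ℓ t) := by
    simp [Fin.val_last]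
  rw [hlast]
  have hcast : ∀ j : Fin t, (if ((Fin.castSucc j : Fin (t+1)) : ℕ) = t
      then Sq b (plpow p ℓ t) else Gp p ℓ ((Fin.castSucc j : Fin (t+1)) : ℕ)) = Gp p ℓ (j : ℕ) := by
    intro j
    rw [Fin.coe_castSucc, if_neg (by omega : (j:ℕ) ≠ t)]
  rw [Finset.prod_congr rfl (fun j _ => hcast j), Fin.prod_univ_eq_prod_range]
  rw [qnumAt_mul b _ hb, qnumAt_plpow p ℓ (by omega) (by omega) t ht, mul_comm]
end

section
/- Down-admissibility gives a bijection: for v ∈ ℕ with pℓ-adic expansion, the map S ↦ v[S] (negating the digits indexed by S) is a bijection from down-admissible subsets S ⊂ ℕ₀ for v onto the support supp(v), and the support has exactly 2^{g(v)} elements, where g(v) is the number of non-zero non-leading digits of v. -/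
/-- A finite set `S ⊆ ℕ` is down-admissible for a digit sequence `a` if (i) the digit at the
minimum of every stretch (maximal run of consecutive integers) of `S` is nonzero, and
(ii) if `s ∈ S` and `a (s+1) = 0` then `s+1 ∈ S`. -/
def DownAdm (a : ℕ → ℕ) (S : Finset ℕ) : Prop :=
  (∀ s ∈ S, (s = 0 ∨ s - 1 ∉ S) → a s ≠ 0) ∧ (∀ s ∈ S, a (s + 1) = 0 → s + 1 ∈ S)

/-- The downward reflection `v[S]`: negate the digits of `v` indexed by `S`
(keeping the leading digit `a j`), interpreted as an integer. -/
def downReflect (p ℓ : ℕ) (a : ℕ → ℕ) (j : ℕ) (S : Finset ℕ) : ℤ :=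
  ((a j * plpow p ℓ j : ℕ) : ℤ) +
    ∑ i ∈ Finset.range j, (if i ∈ S then (-1 : ℤ) else 1) * ((a i * plpow p ℓ i : ℕ) : ℤ)

lemma sum_digits_lt (p ℓ : ℕ) (hp : 2 ≤ p) (hℓ : 2 ≤ ℓ) (a : ℕ → ℕ)
    (ha0 : a 0 < ℓ) (hai : ∀ i, 0 < i → a i < p) :
    ∀ k, (∑ i ∈ Finset.range k, a i * plpow p ℓ i) < plpow p ℓ k := by
  intro k
  induction k with
  | zero => simp [plpow]
  | succ k ih =>
    rw [Finset.sum_range_succ]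
    have h1 : (1 + a k) * plpow p ℓ k ≤ plpow p ℓ (k + 1) := by
      cases k with
      | zero => simp [plpow]; omega
      | succ m =>
        have h2 : 1 + a (m + 1) ≤ p := by have := hai (m + 1) (Nat.succ_pos m); omega
        calc (1 + a (m + 1)) * plpow p ℓ (m + 1) ≤ p * plpow p ℓ (m + 1) :=
              Nat.mul_le_mul_right _ h2
          _ = plpow p ℓ (m + 2) := by simp [plpow, pow_succ]; ring
    nlinarith

lemma sign_eq (p ℓ : ℕ) (hp : 2 ≤ p) (hℓ : 2 ≤ ℓ) (a : ℕ → ℕ)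
    (ha0 : a 0 < ℓ) (hai : ∀ i, 0 < i → a i < p)
    (ε ε' : ℕ → ℤ) (hε : ∀ i, ε i = 1 ∨ ε i = -1) (hε' : ∀ i, ε' i = 1 ∨ ε' i = -1) :
    ∀ k, (∑ i ∈ Finset.range k, ε i * ((a i * plpow p ℓ i : ℕ) : ℤ)) =
         (∑ i ∈ Finset.range k, ε' i * ((a i * plpow p ℓ i : ℕ) : ℤ)) →
      ∀ i < k, a i ≠ 0 → ε i = ε' i := by
  intro k
  induction k with
  | zero => intro _ i hi; omega
  | succ k ih =>
    intro h
    rw [Finset.sum_range_succ, Finset.sum_range_succ] at h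
    have hkk : a k ≠ 0 → ε k = ε' k := by
      intro hak
      by_contra hne
      have hd : |ε k - ε' k| = 2 := by
        rcases hε k with h1 | h1 <;> rcases hε' k with h2 | h2 <;> rw [h1, h2] <;>
          first
          | (exfalso; exact hne (h1.trans h2.symm))
          | norm_num
      have hB : (∑ i ∈ Finset.range k, ((a i * plpow p ℓ i : ℕ) : ℤ))
          < ((plpow p ℓ k : ℕ) : ℤ) := by
        exact_mod_cast sum_digits_lt p ℓ hp hℓ a ha0 hai k
      have hck : ((plpow p ℓ k : ℕ) : ℤ) ≤ ((a k * plpow p ℓ k : ℕ) : ℤ) := by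
        have : plpow p ℓ k ≤ a k * plpow p ℓ k :=
          Nat.le_mul_of_pos_left _ (Nat.pos_of_ne_zero hak)
        exact_mod_cast this
      have heq : (ε k - ε' k) * ((a k * plpow p ℓ k : ℕ) : ℤ)
          = ∑ i ∈ Finset.range k, (ε' i - ε i) * ((a i * plpow p ℓ i : ℕ) : ℤ) := by
        simp only [sub_mul, Finset.sum_sub_distrib]
        linarith
      have habs : |(ε k - ε' k) * ((a k * plpow p ℓ k : ℕ) : ℤ)|
          ≤ 2 * ∑ i ∈ Finset.range k, ((a i * plpow p ℓ i : ℕ) : ℤ) := by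
        rw [heq]
        calc |∑ i ∈ Finset.range k, (ε' i - ε i) * ((a i * plpow p ℓ i : ℕ) : ℤ)|
            ≤ ∑ i ∈ Finset.range k, |(ε' i - ε i) * ((a i * plpow p ℓ i : ℕ) : ℤ)| :=
              Finset.abs_sum_le_sum_abs _ _
          _ ≤ ∑ i ∈ Finset.range k, 2 * ((a i * plpow p ℓ i : ℕ) : ℤ) := by
              apply Finset.sum_le_sum
              intro i _
              rw [abs_mul, abs_of_nonneg (by positivity : (0:ℤ) ≤ ((a i * plpow p ℓ i : ℕ) : ℤ))]
              have h2 : |ε' i - ε i| ≤ 2 := by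
                rcases hε i with h1 | h1 <;> rcases hε' i with h2 | h2 <;> rw [h1, h2] <;> norm_num
              exact mul_le_mul_of_nonneg_right h2 (by positivity)
          _ = 2 * ∑ i ∈ Finset.range k, ((a i * plpow p ℓ i : ℕ) : ℤ) :=
              (Finset.mul_sum _ _ _).symm
      rw [abs_mul, hd,
        abs_of_nonneg (by positivity : (0:ℤ) ≤ ((a k * plpow p ℓ k : ℕ) : ℤ))] at habs
      linarith
    have htopeq : ε k * ((a k * plpow p ℓ k : ℕ) : ℤ)
        = ε' k * ((a k * plpow p ℓ k : ℕ) : ℤ) := by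
      by_cases hak : a k = 0
      · simp [hak]
      · rw [hkk hak]
    have hsum : (∑ i ∈ Finset.range k, ε i * ((a i * plpow p ℓ i : ℕ) : ℤ))
        = ∑ i ∈ Finset.range k, ε' i * ((a i * plpow p ℓ i : ℕ) : ℤ) := by linarith
    intro i hi hai0
    rcases Nat.lt_succ_iff_lt_or_eq.mp hi with h' | h'
    · exact ih hsum i h' hai0
    · subst h'; exact hkk hai0

lemma downAdm_ext (a : ℕ → ℕ) (S S' : Finset ℕ) (hS : DownAdm a S) (hS' : DownAdm a S')
    (h : ∀ i, a i ≠ 0 → (i ∈ S ↔ i ∈ S')) : S = S' := by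
  apply Finset.ext
  intro i
  induction i with
  | zero =>
    by_cases h0 : a 0 = 0
    · constructor <;> intro hm
      · exact absurd h0 (hS.1 0 hm (Or.inl rfl))
      · exact absurd h0 (hS'.1 0 hm (Or.inl rfl))
    · exact h 0 h0
  | succ i ih =>
    by_cases h0 : a (i + 1) = 0
    · have e1 : i + 1 ∈ S ↔ i ∈ S := by
        constructor
        · intro hm
          by_contra hi
          exact hS.1 (i + 1) hm (Or.inr (by simpa using hi)) h0
        · intro hm; exact hS.2 i hm h0
      have e2 : i + 1 ∈ S' ↔ i ∈ S' := by
        constructor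
        · intro hm
          by_contra hi
          exact hS'.1 (i + 1) hm (Or.inr (by simpa using hi)) h0
        · intro hm; exact hS'.2 i hm h0
      rw [e1, e2, ih]
    · exact h _ h0

open Classical in
noncomputable def fillSet (a : ℕ → ℕ) (j : ℕ) (T : Finset ℕ) : Finset ℕ :=
  (Finset.range j).filter (fun i => ∃ t ∈ T, t ≤ i ∧ ∀ m, t < m → m ≤ i → a m = 0)

open Classical in
lemma fillSet_adm (a : ℕ → ℕ) (j : ℕ) (haj : a j ≠ 0) (T : Finset ℕ)
    (hT : T ⊆ (Finset.range j).filter (fun i => a i ≠ 0)) : DownAdm a (fillSet a j T) := by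
  constructor
  · intro s hs hcond has
    rw [fillSet, Finset.mem_filter] at hs
    obtain ⟨hsr, t, htT, hts, hzero⟩ := hs
    have hat : a t ≠ 0 := (Finset.mem_filter.mp (hT htT)).2
    have hts' : t < s := by
      rcases Nat.lt_or_ge t s with h' | h'
      · exact h'
      · exfalso
        have hts2 : t = s := by omega
        exact hat (by rw [hts2]; exact has)
    rcases hcond with h' | h'
    · omega
    · apply h'
      rw [fillSet, Finset.mem_filter]
      refine ⟨Finset.mem_range.mpr (by have := Finset.mem_range.mp hsr; omega),
        t, htT, by omega, fun m hm1 hm2 => hzero m hm1 (by omega)⟩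
  · intro s hs h0
    rw [fillSet, Finset.mem_filter] at hs
    obtain ⟨hsr, t, htT, hts, hzero⟩ := hs
    have hsj : s < j := Finset.mem_range.mp hsr
    have hs1j : s + 1 < j := by
      rcases Nat.lt_or_ge (s + 1) j with h' | h'
      · exact h'
      · exfalso; have : s + 1 = j := by omega
        exact haj (this ▸ h0)
    rw [fillSet, Finset.mem_filter]
    refine ⟨Finset.mem_range.mpr hs1j, t, htT, by omega, fun m hm1 hm2 => ?_⟩
    by_cases hms : m ≤ s
    · exact hzero m hm1 hms
    · have : m = s + 1 := by omega
      rw [this]; exact h0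

open Classical in
lemma fillSet_inter (a : ℕ → ℕ) (j : ℕ) (T : Finset ℕ)
    (hT : T ⊆ (Finset.range j).filter (fun i => a i ≠ 0)) :
    fillSet a j T ∩ (Finset.range j).filter (fun i => a i ≠ 0) = T := by
  ext i
  simp only [Finset.mem_inter, fillSet, Finset.mem_filter, Finset.mem_range]
  constructor
  · rintro ⟨⟨hij, t, htT, hts, hzero⟩, _, hai⟩
    rcases Nat.lt_or_ge t i with h' | h'
    · exact absurd (hzero i h' le_rfl) hai
    · have : t = i := by omega
      exact this ▸ htT
  · intro hiT
    have h' := Finset.mem_filter.mp (hT hiT)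
    have hij : i < j := Finset.mem_range.mp h'.1
    exact ⟨⟨hij, i, hiT, le_rfl, fun m hm1 hm2 => by omega⟩, hij, h'.2⟩

open Classical in
lemma count_downAdm (a : ℕ → ℕ) (j : ℕ) (haj : a j ≠ 0) :
    ((Finset.range j).powerset.filter (fun S => DownAdm a S)).card =
      2 ^ ((Finset.range j).filter (fun i => a i ≠ 0)).card := by
  rw [← Finset.card_powerset]
  apply Finset.card_bij (fun S _ => S ∩ (Finset.range j).filter (fun i => a i ≠ 0))
  · intro S hS
    exact Finset.mem_powerset.mpr Finset.inter_subset_right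
  · intro S hS S' hS' hEq
    rw [Finset.mem_filter, Finset.mem_powerset] at hS hS'
    apply downAdm_ext a S S' hS.2 hS'.2
    intro i hi
    by_cases hij : i < j
    · have hiN : i ∈ (Finset.range j).filter (fun i => a i ≠ 0) :=
        Finset.mem_filter.mpr ⟨Finset.mem_range.mpr hij, hi⟩
      have := Finset.ext_iff.mp hEq i
      simp only [Finset.mem_inter, hiN, and_true] at this
      exact this
    · constructor <;> intro hm
      · exact absurd (Finset.mem_range.mp (hS.1 hm)) hij
      · exact absurd (Finset.mem_range.mp (hS'.1 hm)) hij
  · intro T hT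
    rw [Finset.mem_powerset] at hT
    refine ⟨fillSet a j T, ?_, fillSet_inter a j T hT⟩
    rw [Finset.mem_filter, Finset.mem_powerset]
    exact ⟨Finset.filter_subset _ _, fillSet_adm a j haj T hT⟩

open Classical in
/-- Down-admissibility gives a bijection: `S ↦ v[S]` is injective on down-admissible sets,
there are exactly `2^{g(v)}` of them (where `g(v)` is the number of nonzero non-leading
digits of `v`), and hence the support `supp(v)` (the image) has exactly `2^{g(v)}`
elements. -/
theorem downAdm_reflect_bijection (p ℓ : ℕ) (hp : 2 ≤ p) (hℓ : 2 ≤ ℓ)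
    (j : ℕ) (a : ℕ → ℕ) (haj : a j ≠ 0) (htop : ∀ i, j < i → a i = 0)
    (ha0 : a 0 < ℓ) (hai : ∀ i, 0 < i → a i < p) :
    Set.InjOn (downReflect p ℓ a j) {S : Finset ℕ | S ⊆ Finset.range j ∧ DownAdm a S} ∧
    ((Finset.range j).powerset.filter (fun S => DownAdm a S)).card =
      2 ^ ((Finset.range j).filter (fun i => a i ≠ 0)).card ∧
    (((Finset.range j).powerset.filter (fun S => DownAdm a S)).image
        (downReflect p ℓ a j)).card =
      2 ^ ((Finset.range j).filter (fun i => a i ≠ 0)).card := by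
  have hinj : Set.InjOn (downReflect p ℓ a j)
      {S : Finset ℕ | S ⊆ Finset.range j ∧ DownAdm a S} := by
    intro S hS S' hS' hEq
    obtain ⟨hSr, hSa⟩ := hS
    obtain ⟨hS'r, hS'a⟩ := hS'
    have hsum : (∑ i ∈ Finset.range j,
          (if i ∈ S then (-1 : ℤ) else 1) * ((a i * plpow p ℓ i : ℕ) : ℤ))
        = ∑ i ∈ Finset.range j,
          (if i ∈ S' then (-1 : ℤ) else 1) * ((a i * plpow p ℓ i : ℕ) : ℤ) := by
      have h' := hEq
      unfold downReflect at h'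
      linarith
    have hsg := sign_eq p ℓ hp hℓ a ha0 hai
      (fun i => if i ∈ S then -1 else 1) (fun i => if i ∈ S' then -1 else 1)
      (fun i => by by_cases h : i ∈ S <;> simp [h])
      (fun i => by by_cases h : i ∈ S' <;> simp [h]) j hsum
    apply downAdm_ext a S S' hSa hS'a
    intro i hi
    by_cases hij : i < j
    · have h' := hsg i hij hi
      by_cases h1 : i ∈ S <;> by_cases h2 : i ∈ S' <;> simp [h1, h2] at h' ⊢ <;> norm_num at h'
    · have h1 : i ∉ S := fun h => hij (Finset.mem_range.mp (hSr h))
      have h2 : i ∉ S' := fun h => hij (Finset.mem_range.mp (hS'r h))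
      simp [h1, h2]
  have hcount := count_downAdm a j haj
  refine ⟨hinj, hcount, ?_⟩
  have hinj' : Set.InjOn (downReflect p ℓ a j)
      ↑((Finset.range j).powerset.filter (fun S => DownAdm a S)) := by
    intro S hS S' hS' h
    apply hinj ?_ ?_ h
    · rw [Finset.mem_coe, Finset.mem_filter, Finset.mem_powerset] at hS
      exact hS
    · rw [Finset.mem_coe, Finset.mem_filter, Finset.mem_powerset] at hS'
      exact hS'
  rw [Finset.card_image_of_injOn hinj', hcount]
end

section
/- If S is down-admissible for v, then S is up-admissible for v[S] and v[S](S) = v (downward followed by upward reflection along the same set recovers v). -/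
/-- The `i`-th `pℓ`-adic digit of `n`. -/
def plDigit (p ℓ n : ℕ) : ℕ → ℕ
  | 0 => n % ℓ
  | i + 1 => n / ℓ / p ^ i % p

/-- `S` is up-admissible for a digit sequence `c` if (i) the digit at the minimum of every
stretch of `S` is nonzero, and (ii) if `s ∈ S` and `c (s+1) = p - 1` then `s+1 ∈ S`. -/
def UpAdm (p : ℕ) (c : ℕ → ℕ) (S : Finset ℕ) : Prop :=
  (∀ s ∈ S, (s = 0 ∨ s - 1 ∉ S) → c s ≠ 0) ∧ (∀ s ∈ S, c (s + 1) = p - 1 → s + 1 ∈ S)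

lemma aux_sum_lt (p : ℕ) (hp : 2 ≤ p) (e : ℕ → ℕ) (he : ∀ t, e t < p) (i : ℕ) :
    ∑ t ∈ Finset.range i, e t * p ^ t < p ^ i := by
  induction i with
  | zero => simp
  | succ i ih =>
    rw [Finset.sum_range_succ, pow_succ]
    have h0 : e i ≤ p - 1 := by have := he i; omega
    have h1 : e i * p ^ i ≤ (p - 1) * p ^ i := Nat.mul_le_mul_right _ h0
    have h2 : p ^ i + (p - 1) * p ^ i = p ^ i * p := by
      have h3 : 1 + (p - 1) = p := by omega
      calc p ^ i + (p - 1) * p ^ i = (1 + (p - 1)) * p ^ i := by ring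
        _ = p ^ i * p := by rw [h3]; ring
    calc ∑ t ∈ Finset.range i, e t * p ^ t + e i * p ^ i
        < p ^ i + (p - 1) * p ^ i := Nat.add_lt_add_of_lt_of_le ih h1
      _ = p ^ i * p := h2

lemma aux_digit (p : ℕ) (hp : 2 ≤ p) (i : ℕ) : ∀ (e : ℕ → ℕ), (∀ t, e t < p) → ∀ (k : ℕ),
    (∑ t ∈ Finset.range k, e t * p ^ t) / p ^ i % p = if i < k then e i else 0 := by
  induction i with
  | zero =>
    intro e he k
    rcases k with _ | m
    · simp
    · rw [Finset.sum_range_succ']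
      simp only [pow_zero, Nat.pow_zero, Nat.div_one, mul_one]
      have hstep : ∀ t, e (t + 1) * p ^ (t + 1) = p * (e (t + 1) * p ^ t) := fun t => by ring
      rw [Finset.sum_congr rfl (fun t _ => hstep t), ← Finset.mul_sum]
      simp [Nat.mul_add_mod, Nat.mod_eq_of_lt (he 0)]
  | succ i ih =>
    intro e he k
    rcases k with _ | m
    · simp
    · rw [Finset.sum_range_succ']
      have hstep : ∀ t, e (t + 1) * p ^ (t + 1) = p * (e (t + 1) * p ^ t) := fun t => by ring
      rw [Finset.sum_congr rfl (fun t _ => hstep t), ← Finset.mul_sum, pow_zero, mul_one]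
      rw [pow_succ', ← Nat.div_div_eq_div_mul]
      have hdiv : (p * (∑ t ∈ Finset.range m, e (t + 1) * p ^ t) + e 0) / p
          = ∑ t ∈ Finset.range m, e (t + 1) * p ^ t := by
        rw [Nat.mul_add_div (by omega : 0 < p), Nat.div_eq_of_lt (he 0), add_zero]
      rw [hdiv, ih (fun t => e (t + 1)) (fun t => he (t + 1)) m]
      by_cases h : i < m
      · rw [if_pos h, if_pos (by omega)]
      · rw [if_neg h, if_neg (by omega)]

lemma plDigit_sum (p ℓ : ℕ) (hp : 2 ≤ p) (hℓ : 2 ≤ ℓ) (d : ℕ → ℕ)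
    (hd0 : d 0 < ℓ) (hdi : ∀ i, d (i + 1) < p) (m i : ℕ) :
    plDigit p ℓ (∑ t ∈ Finset.range m, d t * plpow p ℓ t) i = if i < m then d i else 0 := by
  rcases m with _ | k
  · rcases i with _ | s <;> simp [plDigit]
  · have hsplit : (∑ t ∈ Finset.range (k + 1), d t * plpow p ℓ t)
        = d 0 + ℓ * ∑ t ∈ Finset.range k, d (t + 1) * p ^ t := by
      rw [Finset.sum_range_succ']
      have hstep : ∀ t, d (t + 1) * plpow p ℓ (t + 1) = ℓ * (d (t + 1) * p ^ t) := by
        intro t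
        show d (t + 1) * (p ^ t * ℓ) = ℓ * (d (t + 1) * p ^ t)
        ring
      rw [Finset.sum_congr rfl (fun t _ => hstep t), ← Finset.mul_sum]
      show ℓ * _ + d 0 * 1 = _
      ring
    rcases i with _ | s
    · simp only [plDigit, hsplit]
      simp [Nat.mul_add_mod, Nat.mod_eq_of_lt hd0, add_comm (d 0)]
    · simp only [plDigit, hsplit]
      have hdiv : (d 0 + ℓ * ∑ t ∈ Finset.range k, d (t + 1) * p ^ t) / ℓ
          = ∑ t ∈ Finset.range k, d (t + 1) * p ^ t := by
        rw [add_comm, Nat.mul_add_div (by omega : 0 < ℓ),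
          Nat.div_eq_of_lt hd0, add_zero]
      rw [hdiv, aux_digit p hp s (fun t => d (t + 1)) (fun t => hdi t) k]
      by_cases h : s < k
      · rw [if_pos h, if_pos (by omega)]
      · rw [if_neg h, if_neg (by omega)]

lemma plpow_succ_s13 (p ℓ k : ℕ) : plpow p ℓ (k + 1) = (if k = 0 then ℓ else p) * plpow p ℓ k := by
  rcases k with _ | m
  · show p ^ 0 * ℓ = ℓ * 1
    ring
  · show p ^ (m + 1) * ℓ = p * (p ^ m * ℓ)
    ring

/-- If `S` is down-admissible for `v`, then `v[S] ≥ 0`, `S` is up-admissible for the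
`pℓ`-adic digits of `v[S]`, and the upward reflection of `v[S]` along `S` (whose digits
are `c'_k = -c_k` if `k ∈ S`, `c_k + 2` if `k ∉ S, k-1 ∈ S`, and `c_k` otherwise)
recovers `v`. -/
theorem downReflect_upReflect (p ℓ : ℕ) (hp : 2 ≤ p) (hℓ : 2 ≤ ℓ)
    (j : ℕ) (a : ℕ → ℕ) (haj : a j ≠ 0) (htop : ∀ i, j < i → a i = 0)
    (ha0 : a 0 < ℓ) (hai : ∀ i, 0 < i → a i < p)
    (S : Finset ℕ) (hS : S ⊆ Finset.range j) (hadm : DownAdm a S) :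
    0 ≤ downReflect p ℓ a j S ∧
    UpAdm p (plDigit p ℓ (downReflect p ℓ a j S).toNat) S ∧
    (∑ i ∈ Finset.range (j + 1),
        (if i ∈ S then -((plDigit p ℓ (downReflect p ℓ a j S).toNat i : ℤ))
          else if 0 < i ∧ i - 1 ∈ S then
            (plDigit p ℓ (downReflect p ℓ a j S).toNat i : ℤ) + 2
          else (plDigit p ℓ (downReflect p ℓ a j S).toNat i : ℤ)) *
          ((plpow p ℓ i : ℕ) : ℤ)) =
      ∑ i ∈ Finset.range (j + 1), ((a i * plpow p ℓ i : ℕ) : ℤ) := by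
  classical
  obtain ⟨h1, h2⟩ := hadm
  -- the digits of the downward reflection
  set c : ℕ → ℕ := fun k =>
    if k ∈ S then (if k = 0 then ℓ else p) - a k - (if 0 < k ∧ k - 1 ∈ S then 1 else 0)
    else a k - (if 0 < k ∧ k - 1 ∈ S then 1 else 0) with hc
  -- admissibility consequences
  have hmin : ∀ k ∈ S, ¬(0 < k ∧ k - 1 ∈ S) → 1 ≤ a k := by
    intro k hk hk2
    have hor : k = 0 ∨ k - 1 ∉ S := by
      by_cases h0 : k = 0
      · exact Or.inl h0
      · exact Or.inr fun hmem => hk2 ⟨by omega, hmem⟩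
    have := h1 k hk hor
    omega
  have hout : ∀ k, 0 < k → k - 1 ∈ S → k ∉ S → 1 ≤ a k := by
    intro k hk hk1 hkS
    by_contra hcon
    have heq : k - 1 + 1 = k := by omega
    have hmem := h2 (k - 1) hk1 (by rw [heq]; omega)
    rw [heq] at hmem
    exact hkS hmem
  -- digit bounds
  have hcval_in : ∀ k ∈ S, c k = (if k = 0 then ℓ else p) - a k - (if 0 < k ∧ k - 1 ∈ S then 1 else 0) := by
    intro k hk; simp only [hc, if_pos hk]
  have hcval_out : ∀ k, k ∉ S → c k = a k - (if 0 < k ∧ k - 1 ∈ S then 1 else 0) := by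
    intro k hk; simp only [hc, if_neg hk]
  have hS0 : ∀ k ∈ S, k < j := fun k hk => Finset.mem_range.mp (hS hk)
  have hnot0 : ¬(0 < 0 ∧ 0 - 1 ∈ S) := by simp
  have hc0 : c 0 < ℓ := by
    by_cases h0 : 0 ∈ S
    · rw [hcval_in 0 h0, if_pos rfl, if_neg hnot0]
      have := hmin 0 h0 hnot0
      omega
    · rw [hcval_out 0 h0, if_neg hnot0]
      omega
  have hcs : ∀ k, c (k + 1) < p := by
    intro k
    have hap := hai (k + 1) (by omega)
    by_cases hk : k + 1 ∈ S
    · rw [hcval_in _ hk]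
      have h0 : ¬(k + 1 = 0) := by omega
      rw [if_neg h0]
      by_cases h3 : 0 < k + 1 ∧ (k + 1) - 1 ∈ S
      · rw [if_pos h3]; omega
      · rw [if_neg h3]
        have := hmin _ hk h3
        omega
    · rw [hcval_out _ hk]
      split <;> omega
  have hcz : ∀ k, j < k → c k = 0 := by
    intro k hkj
    have hk : k ∉ S := fun h => by have := hS0 k h; omega
    rw [hcval_out _ hk]
    have h3 : ¬(0 < k ∧ k - 1 ∈ S) := by
      rintro ⟨hk0, hmem⟩
      have := hS0 _ hmem
      omega
    rw [if_neg h3, htop k hkj]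
  -- the value as a natural number
  set n : ℕ := ∑ t ∈ Finset.range (j + 1), c t * plpow p ℓ t with hn
  have hdig : ∀ i, plDigit p ℓ n i = c i := by
    intro i
    rw [hn, plDigit_sum p ℓ hp hℓ c hc0 hcs (j + 1) i]
    split
    · rfl
    · exact (hcz i (by omega)).symm
  -- cast facts for plpow
  have hppos : ∀ k, 0 < plpow p ℓ k := by
    intro k
    rcases k with _ | m
    · exact Nat.one_pos
    · exact Nat.mul_pos (Nat.pow_pos (by omega : 0 < p)) (by omega)
  have hbk : ∀ k, 0 < k → ((plpow p ℓ (k + 1) : ℕ) : ℤ) = (p : ℤ) * ((plpow p ℓ k : ℕ) : ℤ) := by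
    intro k hk
    rw [plpow_succ_s13, if_neg (by omega)]
    push_cast
    ring
  have hb1 : ((plpow p ℓ 1 : ℕ) : ℤ) = (ℓ : ℤ) * ((plpow p ℓ 0 : ℕ) : ℤ) := by
    rw [plpow_succ_s13, if_pos rfl]
    push_cast
    ring
  -- the termwise identity for the downward reflection
  have hterm : ∀ k ∈ Finset.range (j + 1), ((c k * plpow p ℓ k : ℕ) : ℤ)
      = (if k ∈ S then (-1 : ℤ) else 1) * ((a k * plpow p ℓ k : ℕ) : ℤ)
        + (if k ∈ S then ((plpow p ℓ (k + 1) : ℕ) : ℤ) else 0)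
        - (if 0 < k ∧ k - 1 ∈ S then ((plpow p ℓ k : ℕ) : ℤ) else 0) := by
    intro k _
    by_cases hk : k ∈ S
    · rw [hcval_in _ hk, if_pos hk, if_pos hk]
      by_cases h3 : 0 < k ∧ k - 1 ∈ S
      · rw [if_pos h3, if_pos h3, if_neg (by omega : ¬ k = 0)]
        have hap := hai k h3.1
        have hsub : ((p - a k - 1 : ℕ) : ℤ) = (p : ℤ) - (a k : ℤ) - 1 := by omega
        rw [Nat.cast_mul, Nat.cast_mul, hsub, hbk k h3.1]
        ring
      · rw [if_neg h3, if_neg h3]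
        have ha1 := hmin k hk h3
        rcases Nat.eq_zero_or_pos k with h0 | h0
        · subst h0
          rw [if_pos rfl]
          have hsub : ((ℓ - a 0 - 0 : ℕ) : ℤ) = (ℓ : ℤ) - (a 0 : ℤ) := by omega
          rw [Nat.cast_mul, Nat.cast_mul, hsub, hb1]
          ring
        · rw [if_neg (by omega : ¬ k = 0)]
          have hap := hai k h0
          have hsub : ((p - a k - 0 : ℕ) : ℤ) = (p : ℤ) - (a k : ℤ) := by omega
          rw [Nat.cast_mul, Nat.cast_mul, hsub, hbk k h0]
          ring
    · rw [hcval_out _ hk, if_neg hk, if_neg hk]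
      by_cases h3 : 0 < k ∧ k - 1 ∈ S
      · rw [if_pos h3, if_pos h3]
        have ha1 := hout k h3.1 h3.2 hk
        have hsub : ((a k - 1 : ℕ) : ℤ) = (a k : ℤ) - 1 := by omega
        rw [Nat.cast_mul, Nat.cast_mul, hsub]
        ring
      · rw [if_neg h3, if_neg h3, Nat.sub_zero]
        push_cast
        ring
  -- the telescoping cancellation
  have hcancel : (∑ k ∈ Finset.range (j + 1), (if k ∈ S then ((plpow p ℓ (k + 1) : ℕ) : ℤ) else 0))
      = ∑ k ∈ Finset.range (j + 1), (if 0 < k ∧ k - 1 ∈ S then ((plpow p ℓ k : ℕ) : ℤ) else 0) := by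
    rw [Finset.sum_range_succ' (fun k => if 0 < k ∧ k - 1 ∈ S then ((plpow p ℓ k : ℕ) : ℤ) else 0) j]
    rw [Finset.sum_range_succ (fun k => if k ∈ S then ((plpow p ℓ (k + 1) : ℕ) : ℤ) else 0) j]
    have hj : j ∉ S := fun h => by have := hS0 j h; omega
    rw [if_neg hj, add_zero]
    rw [if_neg hnot0, add_zero]
    apply Finset.sum_congr rfl
    intro t _
    have h4 : (0 < t + 1 ∧ (t + 1) - 1 ∈ S) ↔ t ∈ S := by
      constructor
      · rintro ⟨_, h⟩; simpa using h
      · intro h; exact ⟨by omega, by simpa using h⟩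
    by_cases ht : t ∈ S
    · rw [if_pos ht, if_pos (h4.mpr ht)]
    · rw [if_neg ht, if_neg (fun h => ht (h4.mp h))]
  -- downReflect = n
  have hA : downReflect p ℓ a j S = (n : ℤ) := by
    have hcast : (n : ℤ) = ∑ t ∈ Finset.range (j + 1), ((c t * plpow p ℓ t : ℕ) : ℤ) := by
      rw [hn]; push_cast; rfl
    rw [hcast, Finset.sum_congr rfl hterm]
    rw [Finset.sum_sub_distrib, Finset.sum_add_distrib, hcancel]
    simp only [add_sub_cancel_right]
    rw [downReflect, Finset.sum_range_succ]
    have hj : j ∉ S := fun h => by have := hS0 j h; omega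
    rw [if_neg hj, one_mul, add_comm]
  have hA0 : (0 : ℤ) ≤ downReflect p ℓ a j S := by rw [hA]; exact Int.natCast_nonneg n
  have htn : (downReflect p ℓ a j S).toNat = n := by rw [hA, Int.toNat_natCast]
  refine ⟨hA0, ⟨?_, ?_⟩, ?_⟩
  · -- UpAdm (i)
    intro s hs hcond
    rw [htn, hdig s, hcval_in s hs]
    have h3 : ¬(0 < s ∧ s - 1 ∈ S) := by
      rcases hcond with h0 | h0
      · omega
      · rintro ⟨_, hmem⟩; exact h0 hmem
    rw [if_neg h3]
    have ha1 := hmin s hs h3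
    rcases Nat.eq_zero_or_pos s with h0 | h0
    · subst h0; rw [if_pos rfl]; omega
    · rw [if_neg (by omega : ¬ s = 0)]
      have := hai s h0
      omega
  · -- UpAdm (ii)
    intro s hs hval
    by_contra hns
    rw [htn, hdig (s + 1), hcval_out _ hns] at hval
    have h3 : 0 < s + 1 ∧ (s + 1) - 1 ∈ S := ⟨by omega, by simpa using hs⟩
    rw [if_pos h3] at hval
    have := hai (s + 1) (by omega)
    omega
  · -- the reflected sum identity
    have hterm2 : ∀ i ∈ Finset.range (j + 1),
        (if i ∈ S then -((plDigit p ℓ (downReflect p ℓ a j S).toNat i : ℤ))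
          else if 0 < i ∧ i - 1 ∈ S then (plDigit p ℓ (downReflect p ℓ a j S).toNat i : ℤ) + 2
          else (plDigit p ℓ (downReflect p ℓ a j S).toNat i : ℤ)) * ((plpow p ℓ i : ℕ) : ℤ)
        = ((a i * plpow p ℓ i : ℕ) : ℤ)
          - (if i ∈ S then ((plpow p ℓ (i + 1) : ℕ) : ℤ) else 0)
          + (if 0 < i ∧ i - 1 ∈ S then ((plpow p ℓ i : ℕ) : ℤ) else 0) := by
      intro i _
      rw [htn, hdig i]
      by_cases hk : i ∈ S
      · rw [hcval_in _ hk, if_pos hk, if_pos hk]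
        by_cases h3 : 0 < i ∧ i - 1 ∈ S
        · rw [if_pos h3, if_pos h3, if_neg (by omega : ¬ i = 0)]
          have hap := hai i h3.1
          have hsub : ((p - a i - 1 : ℕ) : ℤ) = (p : ℤ) - (a i : ℤ) - 1 := by omega
          rw [hsub, Nat.cast_mul, hbk i h3.1]
          ring
        · rw [if_neg h3, if_neg h3]
          have ha1 := hmin i hk h3
          rcases Nat.eq_zero_or_pos i with h0 | h0
          · subst h0
            rw [if_pos rfl]
            have hsub : ((ℓ - a 0 - 0 : ℕ) : ℤ) = (ℓ : ℤ) - (a 0 : ℤ) := by omega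
            rw [hsub, Nat.cast_mul, hb1]
            ring
          · rw [if_neg (by omega : ¬ i = 0)]
            have hap := hai i h0
            have hsub : ((p - a i - 0 : ℕ) : ℤ) = (p : ℤ) - (a i : ℤ) := by omega
            rw [hsub, Nat.cast_mul, hbk i h0]
            ring
      · rw [hcval_out _ hk, if_neg hk, if_neg hk]
        by_cases h3 : 0 < i ∧ i - 1 ∈ S
        · rw [if_pos h3, if_pos h3, if_pos h3]
          have ha1 := hout i h3.1 h3.2 hk
          have hsub : ((a i - 1 : ℕ) : ℤ) = (a i : ℤ) - 1 := by omega
          rw [hsub, Nat.cast_mul]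
          ring
        · rw [if_neg h3, if_neg h3, if_neg h3, Nat.sub_zero]
          push_cast
          ring
    rw [Finset.sum_congr rfl hterm2, Finset.sum_add_distrib, Finset.sum_sub_distrib, hcancel]
    ring
end
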